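/- For every n ≥ 2, the submonoid STVH_n := φ₂⁻¹(identity) of STVB_n is generated as a monoid by the elements x_{k,l}, x̄_{k,l} and z_{k,l} for 1 ≤ k ≠ l ≤ n together with γ_1,…,γ_n. -/

import Mathlib

namespace SingTVB

/-- Generators of the singular twisted virtual braid monoid `STVB n`
(0-based indexing: `sig i` is the paper's σ_{i+1}, `gam j` is the paper's γ_{j+1}). -/
inductive Gen (n : ℕ) : Type
  | sig : Fin (n - 1) → Gen n
  | sigb : Fin (n - 1) → Gen n
  | rho : Fin (n - 1) → Gen n
  | tau : Fin (n - 1) → Gen n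
  | gam : Fin n → Gen n

abbrev FM (n : ℕ) := FreeMonoid (Gen n)

/-- The strand `i` (lower strand of the `i`-th crossing), as an element of `Fin n`. -/
def fa {n : ℕ} (i : Fin (n - 1)) : Fin n := ⟨i.val, by have := i.isLt; omega⟩
/-- The strand `i+1` (upper strand of the `i`-th crossing), as an element of `Fin n`. -/
def fb {n : ℕ} (i : Fin (n - 1)) : Fin n := ⟨i.val + 1, by have := i.isLt; omega⟩

def Ws {n : ℕ} (i : Fin (n - 1)) : FM n := FreeMonoid.of (Gen.sig i)
def Wsb {n : ℕ} (i : Fin (n - 1)) : FM n := FreeMonoid.of (Gen.sigb i)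
def Wr {n : ℕ} (i : Fin (n - 1)) : FM n := FreeMonoid.of (Gen.rho i)
def Wt {n : ℕ} (i : Fin (n - 1)) : FM n := FreeMonoid.of (Gen.tau i)
def Wg {n : ℕ} (j : Fin n) : FM n := FreeMonoid.of (Gen.gam j)

/-- `|i - j| > 1`. -/
def Far {m : ℕ} (i j : Fin m) : Prop := i.val + 1 < j.val ∨ j.val + 1 < i.val

/-- Defining relations of the singular twisted virtual braid monoid. -/
inductive Rel (n : ℕ) : FM n → FM n → Prop
  | ss {i j : Fin (n - 1)} (h : Far i j) : Rel n (Ws i * Ws j) (Ws j * Ws i)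
  | rr {i j : Fin (n - 1)} (h : Far i j) : Rel n (Wr i * Wr j) (Wr j * Wr i)
  | sr {i j : Fin (n - 1)} (h : Far i j) : Rel n (Ws i * Wr j) (Wr j * Ws i)
  | tt {i j : Fin (n - 1)} (h : Far i j) : Rel n (Wt i * Wt j) (Wt j * Wt i)
  | st {i j : Fin (n - 1)} (h : Far i j) : Rel n (Ws i * Wt j) (Wt j * Ws i)
  | tr {i j : Fin (n - 1)} (h : Far i j) : Rel n (Wt i * Wr j) (Wr j * Wt i)
  | sss {i j : Fin (n - 1)} (h : j.val = i.val + 1) :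
      Rel n (Ws i * Ws j * Ws i) (Ws j * Ws i * Ws j)
  | rrr {i j : Fin (n - 1)} (h : j.val = i.val + 1) :
      Rel n (Wr i * Wr j * Wr i) (Wr j * Wr i * Wr j)
  | rsr {i j : Fin (n - 1)} (h : j.val = i.val + 1) :
      Rel n (Wr i * Ws j * Wr i) (Wr j * Ws i * Wr j)
  | rtr {i j : Fin (n - 1)} (h : j.val = i.val + 1) :
      Rel n (Wr i * Wt j * Wr i) (Wr j * Wt i * Wr j)
  | sst {i j : Fin (n - 1)} (h : j.val = i.val + 1) :
      Rel n (Ws i * Ws j * Wt i) (Wt j * Ws i * Ws j)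
  | sst' {i j : Fin (n - 1)} (h : j.val = i.val + 1) :
      Rel n (Ws j * Ws i * Wt j) (Wt i * Ws j * Ws i)
  | rho2 (i : Fin (n - 1)) : Rel n (Wr i * Wr i) 1
  | ssb (i : Fin (n - 1)) : Rel n (Ws i * Wsb i) 1
  | sbs (i : Fin (n - 1)) : Rel n (Wsb i * Ws i) 1
  | stc (i : Fin (n - 1)) : Rel n (Ws i * Wt i) (Wt i * Ws i)
  | grel (i : Fin (n - 1)) : Rel n (Wg (fb i) * Wr i) (Wr i * Wg (fa i))
  | rsrg (i : Fin (n - 1)) :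
      Rel n (Wr i * Ws i * Wr i) (Wg (fb i) * Wg (fa i) * Ws i * Wg (fa i) * Wg (fb i))
  | rtrg (i : Fin (n - 1)) :
      Rel n (Wr i * Wt i * Wr i) (Wg (fb i) * Wg (fa i) * Wt i * Wg (fa i) * Wg (fb i))
  | g2 (j : Fin n) : Rel n (Wg j * Wg j) 1
  | gg (i j : Fin n) : Rel n (Wg i * Wg j) (Wg j * Wg i)
  | grc {i : Fin (n - 1)} {j : Fin n} (h1 : j ≠ fa i) (h2 : j ≠ fb i) :
      Rel n (Wg j * Wr i) (Wr i * Wg j)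
  | sgc {i : Fin (n - 1)} {j : Fin n} (h1 : j ≠ fa i) (h2 : j ≠ fb i) :
      Rel n (Ws i * Wg j) (Wg j * Ws i)
  | tgc {i : Fin (n - 1)} {j : Fin n} (h1 : j ≠ fa i) (h2 : j ≠ fb i) :
      Rel n (Wt i * Wg j) (Wg j * Wt i)

/-- The singular twisted virtual braid monoid on `n` strands. -/
abbrev STVB (n : ℕ) := PresentedMonoid (Rel n)

def mkS (n : ℕ) : FM n →* STVB n := PresentedMonoid.mk (Rel n)

def sigE (n : ℕ) (i : Fin (n - 1)) : STVB n := mkS n (Ws i)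
def sigbE (n : ℕ) (i : Fin (n - 1)) : STVB n := mkS n (Wsb i)
def rhoE (n : ℕ) (i : Fin (n - 1)) : STVB n := mkS n (Wr i)
def tauE (n : ℕ) (i : Fin (n - 1)) : STVB n := mkS n (Wt i)
def gamE (n : ℕ) (j : Fin n) : STVB n := mkS n (Wg j)

/-- The transposition `(i, i+1)` in the symmetric group on `Fin n`. -/
def swp {n : ℕ} (i : Fin (n - 1)) : Equiv.Perm (Fin n) := Equiv.swap (fa i) (fb i)

end SingTVB
namespace SingTVB

/-- ρ-generator word with a natural-number (0-based) index; junk value `1` out of range. -/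
def WrN (n : ℕ) (k : ℕ) : FM n := if h : k < n - 1 then Wr ⟨k, h⟩ else 1
def WsN (n : ℕ) (k : ℕ) : FM n := if h : k < n - 1 then Ws ⟨k, h⟩ else 1
def WsbN (n : ℕ) (k : ℕ) : FM n := if h : k < n - 1 then Wsb ⟨k, h⟩ else 1
def WtN (n : ℕ) (k : ℕ) : FM n := if h : k < n - 1 then Wt ⟨k, h⟩ else 1

/-- The ascending word `ρ_{i+1} ρ_{i+2} ⋯ ρ_{j-1}` (0-based strand indices `i < j`). -/
def asc (n i j : ℕ) : FM n := ((List.range' (i + 1) (j - 1 - i)).map (WrN n)).prod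
/-- The descending word `ρ_{j-1} ρ_{j-2} ⋯ ρ_{i+1}` (0-based strand indices `i < j`). -/
def desc (n i j : ℕ) : FM n := ((List.range' (i + 1) (j - 1 - i)).reverse.map (WrN n)).prod

/-- The word for the generator `λ_{i,j}` (0-based strands `i ≠ j`), built from
`λ_{i,i+1} = ρ_i σ̄_i` and `λ_{i+1,i} = ρ_i λ_{i,i+1} ρ_i` by conjugation. -/
def lamW (n i j : ℕ) : FM n :=
  if i < j then desc n i j * (WrN n i * WsbN n i) * asc n i j
  else desc n j i * (WrN n j * (WrN n j * WsbN n j) * WrN n j) * asc n j i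

/-- The word for `λ̄_{i,j}`, built from `λ̄_{i,i+1} = σ_i ρ_i`. -/
def lamBarW (n i j : ℕ) : FM n :=
  if i < j then desc n i j * (WsN n i * WrN n i) * asc n i j
  else desc n j i * (WrN n j * (WsN n j * WrN n j) * WrN n j) * asc n j i

/-- The word for `y_{i,j}`, built from `y_{i,i+1} = τ_i ρ_i`. -/
def yW (n i j : ℕ) : FM n :=
  if i < j then desc n i j * (WtN n i * WrN n i) * asc n i j
  else desc n j i * (WrN n j * (WtN n j * WrN n j) * WrN n j) * asc n j i

/-- The word for `x_{i,j}`, built from `x_{i,i+1} = σ_i` and `x_{i+1,i} = ρ_i σ_i ρ_i`. -/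
def xW (n i j : ℕ) : FM n :=
  if i < j then desc n i j * WsN n i * asc n i j
  else desc n j i * (WrN n j * WsN n j * WrN n j) * asc n j i

/-- The word for `x̄_{i,j}`, with `σ̄` in place of `σ`. -/
def xBarW (n i j : ℕ) : FM n :=
  if i < j then desc n i j * WsbN n i * asc n i j
  else desc n j i * (WrN n j * WsbN n j * WrN n j) * asc n j i

/-- The word for `z_{i,j}`, built from `z_{i,i+1} = τ_i` and `z_{i+1,i} = ρ_i τ_i ρ_i`. -/
def zW (n i j : ℕ) : FM n :=
  if i < j then desc n i j * WtN n i * asc n i j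
  else desc n j i * (WrN n j * WtN n j * WrN n j) * asc n j i

def lam (n : ℕ) (i j : Fin n) : STVB n := mkS n (lamW n i j)
def lamBar (n : ℕ) (i j : Fin n) : STVB n := mkS n (lamBarW n i j)
def yel (n : ℕ) (i j : Fin n) : STVB n := mkS n (yW n i j)
def xel (n : ℕ) (i j : Fin n) : STVB n := mkS n (xW n i j)
def xBar (n : ℕ) (i j : Fin n) : STVB n := mkS n (xBarW n i j)
def zel (n : ℕ) (i j : Fin n) : STVB n := mkS n (zW n i j)

end SingTVB
namespace SingTVB


open List

section RunCalc

variable {M : Type*} [Monoid M] (f : ℕ → M)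

/-- ascending product `f a * f (a+1) * ⋯ * f (b-1)` -/
def ascP (a b : ℕ) : M := ((List.range' a (b - a)).map f).prod

/-- descending product `f (b-1) * ⋯ * f a` -/
def dscP (a b : ℕ) : M := ((List.range' a (b - a)).reverse.map f).prod

lemma ascP_nil {a b : ℕ} (h : b ≤ a) : ascP f a b = 1 := by
  simp [ascP, Nat.sub_eq_zero_of_le h]

lemma dscP_nil {a b : ℕ} (h : b ≤ a) : dscP f a b = 1 := by
  simp [dscP, Nat.sub_eq_zero_of_le h]

lemma range'_split {a c b : ℕ} (hac : a ≤ c) (hcb : c ≤ b) :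
    List.range' a (b - a) = List.range' a (c - a) ++ List.range' c (b - c) := by
  have h2 : List.range' a (c - a) ++ List.range' (a + (c - a)) (b - c) = List.range' a ((c - a) + (b - c)) := List.range'_append_1
  rw [Nat.add_sub_cancel' hac] at h2
  rw [h2]
  congr 1
  omega

lemma ascP_split {a c b : ℕ} (hac : a ≤ c) (hcb : c ≤ b) :
    ascP f a b = ascP f a c * ascP f c b := by
  rw [ascP, range'_split hac hcb, List.map_append, List.prod_append]; rfl

lemma dscP_split {a c b : ℕ} (hac : a ≤ c) (hcb : c ≤ b) :
    dscP f a b = dscP f c b * dscP f a c := by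
  rw [dscP, range'_split hac hcb, List.reverse_append, List.map_append, List.prod_append]; rfl

lemma ascP_single (a : ℕ) : ascP f a (a + 1) = f a := by
  simp [ascP]

lemma dscP_single (a : ℕ) : dscP f a (a + 1) = f a := by
  simp [dscP]

/-- `ascP a b = f a * ascP (a+1) b` -/
lemma ascP_cons {a b : ℕ} (h : a < b) : ascP f a b = f a * ascP f (a + 1) b := by
  rw [ascP_split f (Nat.le_succ a) h, ascP_single]

lemma ascP_concat {a b : ℕ} (h : a ≤ b) : ascP f a (b + 1) = ascP f a b * f b := by
  rw [ascP_split f h (Nat.le_succ b), ascP_single]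

lemma dscP_cons {a b : ℕ} (h : a ≤ b) : dscP f a (b + 1) = f b * dscP f a b := by
  rw [dscP_split f h (Nat.le_succ b), dscP_single]

lemma dscP_concat {a b : ℕ} (h : a < b) : dscP f a b = dscP f (a + 1) b * f a := by
  rw [dscP_split f (Nat.le_succ a) h, dscP_single]

section Inv
variable (hinv : ∀ a, f a * f a = 1)
include hinv

lemma dscP_mul_ascP (a b : ℕ) : dscP f a b * ascP f a b = 1 := by
  induction b with
  | zero => rw [dscP_nil f (Nat.zero_le a), ascP_nil f (Nat.zero_le a), one_mul]
  | succ b ih =>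
      rcases Nat.lt_or_ge a (b+1) with h | h
      · have hab : a ≤ b := Nat.lt_succ_iff.mp h
        rw [dscP_cons f hab, ascP_concat f hab]
        calc f b * dscP f a b * (ascP f a b * f b)
            = f b * ((dscP f a b * ascP f a b) * f b) := by simp only [mul_assoc]
          _ = 1 := by rw [ih, one_mul, hinv]
      · rw [dscP_nil f h, ascP_nil f h, one_mul]

lemma ascP_mul_dscP (a b : ℕ) : ascP f a b * dscP f a b = 1 := by
  induction b with
  | zero => rw [dscP_nil f (Nat.zero_le a), ascP_nil f (Nat.zero_le a), one_mul]
  | succ b ih =>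
      rcases Nat.lt_or_ge a (b+1) with h | h
      · have hab : a ≤ b := Nat.lt_succ_iff.mp h
        rw [dscP_cons f hab, ascP_concat f hab]
        calc ascP f a b * f b * (f b * dscP f a b)
            = ascP f a b * (f b * f b) * dscP f a b := by simp only [mul_assoc]
          _ = 1 := by rw [hinv, mul_one, ih]
      · rw [dscP_nil f h, ascP_nil f h, one_mul]

end Inv

section Far

/-- commutation of an element with a product over a list -/
lemma prod_comm_of_forall {x : M} {L : List ℕ}
    (h : ∀ u ∈ L, x * f u = f u * x) : x * (L.map f).prod = (L.map f).prod * x := by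
  induction L with
  | nil => simp
  | cons a L ih =>
      simp only [List.map_cons, List.prod_cons, ← mul_assoc, h a List.mem_cons_self]
      rw [mul_assoc, ih (fun u hu => h u (List.mem_cons.mpr (Or.inr hu))), ← mul_assoc]

lemma ascP_comm {x : M} {a b : ℕ} (h : ∀ u, a ≤ u → u < b → x * f u = f u * x) :
    x * ascP f a b = ascP f a b * x := by
  refine prod_comm_of_forall f ?_
  intro u hu
  rw [List.mem_range'_1] at hu
  exact h u hu.1 (by omega)

lemma dscP_comm {x : M} {a b : ℕ} (h : ∀ u, a ≤ u → u < b → x * f u = f u * x) :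
    x * dscP f a b = dscP f a b * x := by
  refine prod_comm_of_forall f ?_
  intro u hu
  rw [List.mem_reverse, List.mem_range'_1] at hu
  exact h u hu.1 (by omega)

end Far

section Slide

variable (N : ℕ)
  (hfar : ∀ a b, a + 2 ≤ b → f a * f b = f b * f a)
  (hbraid : ∀ a, a + 2 ≤ N → f a * f (a + 1) * f a = f (a + 1) * f a * f (a + 1))

include hfar

lemma far_comm' {a b : ℕ} (h : a + 2 ≤ b ∨ b + 2 ≤ a) : f a * f b = f b * f a := by
  rcases h with h | h
  · exact hfar a b h
  · exact (hfar b a h).symm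

include hbraid

/-- sliding a letter through a descending run: `dscP a b * f (s+1) = f s * dscP a b` -/
lemma dscP_slide {a b s : ℕ} (h1 : a ≤ s) (h2 : s + 2 ≤ b) (h3 : s + 2 ≤ N) :
    dscP f a b * f (s + 1) = f s * dscP f a b := by
  have emid : dscP f s (s + 2) = f (s + 1) * f s := by
    rw [show s + 2 = (s + 1) + 1 from rfl, dscP_cons f (Nat.le_succ s), dscP_single]
  have e1 : dscP f a b = dscP f (s + 2) b * (f (s + 1) * f s) * dscP f a s := by
    rw [dscP_split f h1 (show s ≤ b by omega), dscP_split f (show s ≤ s + 2 by omega) h2, emid]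
  have c1 : dscP f a s * f (s + 1) = f (s + 1) * dscP f a s := by
    refine (dscP_comm f ?_).symm
    intro u hu1 hu2
    exact far_comm' f hfar (Or.inr (by omega))
  have c2 : dscP f (s + 2) b * f s = f s * dscP f (s + 2) b := by
    refine (dscP_comm f ?_).symm
    intro u hu1 hu2
    exact far_comm' f hfar (Or.inl (by omega))
  rw [e1]
  calc dscP f (s + 2) b * (f (s + 1) * f s) * dscP f a s * f (s + 1)
      = dscP f (s + 2) b * (f (s + 1) * f s) * (dscP f a s * f (s + 1)) := by
        rw [mul_assoc]
    _ = dscP f (s + 2) b * (f (s + 1) * f s) * (f (s + 1) * dscP f a s) := by rw [c1]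
    _ = dscP f (s + 2) b * (f (s + 1) * f s * f (s + 1)) * dscP f a s := by
        simp only [mul_assoc]
    _ = dscP f (s + 2) b * (f s * f (s + 1) * f s) * dscP f a s := by rw [hbraid s h3]
    _ = dscP f (s + 2) b * f s * (f (s + 1) * f s * dscP f a s) := by simp only [mul_assoc]
    _ = f s * dscP f (s + 2) b * (f (s + 1) * f s * dscP f a s) := by rw [c2]
    _ = f s * (dscP f (s + 2) b * (f (s + 1) * f s) * dscP f a s) := by simp only [mul_assoc]

/-- sliding a letter through an ascending run: `f (s+1) * ascP a b = ascP a b * f s` -/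
lemma ascP_slide {a b s : ℕ} (h1 : a ≤ s) (h2 : s + 2 ≤ b) (h3 : s + 2 ≤ N) :
    f (s + 1) * ascP f a b = ascP f a b * f s := by
  have emid : ascP f s (s + 2) = f s * f (s + 1) := by
    rw [ascP_cons f (by omega), show s + 2 = (s + 1) + 1 from rfl, ascP_single]
  have e1 : ascP f a b = ascP f a s * (f s * f (s + 1)) * ascP f (s + 2) b := by
    rw [ascP_split f h1 (show s ≤ b by omega), ascP_split f (show s ≤ s + 2 by omega) h2, emid]
    simp only [mul_assoc]
  have c1 : f (s + 1) * ascP f a s = ascP f a s * f (s + 1) := by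
    refine ascP_comm f ?_
    intro u hu1 hu2
    exact far_comm' f hfar (Or.inr (by omega))
  have c2 : f s * ascP f (s + 2) b = ascP f (s + 2) b * f s := by
    refine ascP_comm f ?_
    intro u hu1 hu2
    exact far_comm' f hfar (Or.inl (by omega))
  rw [e1]
  calc f (s + 1) * (ascP f a s * (f s * f (s + 1)) * ascP f (s + 2) b)
      = f (s + 1) * ascP f a s * ((f s * f (s + 1)) * ascP f (s + 2) b) := by
        simp only [mul_assoc]
    _ = ascP f a s * f (s + 1) * ((f s * f (s + 1)) * ascP f (s + 2) b) := by rw [c1]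
    _ = ascP f a s * (f (s + 1) * f s * f (s + 1)) * ascP f (s + 2) b := by
        simp only [mul_assoc]
    _ = ascP f a s * (f s * f (s + 1) * f s) * ascP f (s + 2) b := by rw [hbraid s h3]
    _ = ascP f a s * (f s * f (s + 1)) * (f s * ascP f (s + 2) b) := by simp only [mul_assoc]
    _ = ascP f a s * (f s * f (s + 1)) * (ascP f (s + 2) b * f s) := by rw [c2]
    _ = ascP f a s * (f s * f (s + 1)) * ascP f (s + 2) b * f s := by simp only [mul_assoc]

end Slide

end RunCalc


section Relations

open Equiv

variable {n : ℕ}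

lemma mk_sound {a b : FM n} (h : Rel n a b) : mkS n a = mkS n b :=
  Quotient.sound (ConGen.Rel.of a b h)

/-- ℕ-indexed ρ element (junk value 1 out of range). -/
def rN (n : ℕ) (t : ℕ) : STVB n := mkS n (WrN n t)
def sN (n : ℕ) (t : ℕ) : STVB n := mkS n (WsN n t)
def sbN (n : ℕ) (t : ℕ) : STVB n := mkS n (WsbN n t)
def tN (n : ℕ) (t : ℕ) : STVB n := mkS n (WtN n t)

/-- ℕ-indexed adjacent transposition (junk value 1 out of range). -/
def swpN (n : ℕ) (t : ℕ) : Equiv.Perm (Fin n) := if h : t < n - 1 then swp ⟨t, h⟩ else 1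

lemma rN_lt {t : ℕ} (h : t < n - 1) : rN n t = mkS n (Wr ⟨t, h⟩) := by
  rw [rN, WrN, dif_pos h]

lemma rN_ge {t : ℕ} (h : ¬ t < n - 1) : rN n t = 1 := by
  rw [rN, WrN, dif_neg h, map_one]

lemma sN_lt {t : ℕ} (h : t < n - 1) : sN n t = mkS n (Ws ⟨t, h⟩) := by
  rw [sN, WsN, dif_pos h]

lemma sN_ge {t : ℕ} (h : ¬ t < n - 1) : sN n t = 1 := by
  rw [sN, WsN, dif_neg h, map_one]

lemma sbN_lt {t : ℕ} (h : t < n - 1) : sbN n t = mkS n (Wsb ⟨t, h⟩) := by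
  rw [sbN, WsbN, dif_pos h]

lemma sbN_ge {t : ℕ} (h : ¬ t < n - 1) : sbN n t = 1 := by
  rw [sbN, WsbN, dif_neg h, map_one]

lemma tN_lt {t : ℕ} (h : t < n - 1) : tN n t = mkS n (Wt ⟨t, h⟩) := by
  rw [tN, WtN, dif_pos h]

lemma tN_ge {t : ℕ} (h : ¬ t < n - 1) : tN n t = 1 := by
  rw [tN, WtN, dif_neg h, map_one]

lemma swpN_lt {t : ℕ} (h : t < n - 1) : swpN n t = swp ⟨t, h⟩ := dif_pos h

lemma swpN_ge {t : ℕ} (h : ¬ t < n - 1) : swpN n t = 1 := dif_neg h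

lemma eq_of_mul_eq_one {M : Type*} [Monoid M] {x y z : M}
    (h1 : x * y = 1) (h2 : y * z = 1) : x = z := by
  have : x * (y * z) = (x * y) * z := (mul_assoc x y z).symm
  rw [h2, h1, mul_one, one_mul] at this
  exact this

/-- ρ_t² = 1 -/
lemma rN_inv (t : ℕ) : rN n t * rN n t = 1 := by
  by_cases h : t < n - 1
  · rw [rN_lt h, ← map_mul]
    exact (mk_sound (Rel.rho2 ⟨t, h⟩)).trans (map_one _)
  · rw [rN_ge h, one_mul]

/-- ρ far commutation, ℕ-indexed -/
lemma rN_far {a b : ℕ} (h : a + 2 ≤ b) : rN n a * rN n b = rN n b * rN n a := by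
  by_cases hb : b < n - 1
  · have ha : a < n - 1 := by omega
    rw [rN_lt ha, rN_lt hb, ← map_mul, ← map_mul]
    exact mk_sound (Rel.rr (Or.inl (by simp; omega)))
  · rw [rN_ge hb, one_mul, mul_one]

/-- ρ braid relation, ℕ-indexed -/
lemma rN_braid {a : ℕ} (h : a + 2 ≤ n - 1) : rN n a * rN n (a + 1) * rN n a
    = rN n (a + 1) * rN n a * rN n (a + 1) := by
  have ha : a < n - 1 := by omega
  have ha1 : a + 1 < n - 1 := by omega
  rw [rN_lt ha, rN_lt ha1, ← map_mul, ← map_mul, ← map_mul, ← map_mul]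
  exact mk_sound (Rel.rrr (by simp))

/-- σ-ρ far commutation -/
lemma sN_rN_far {a b : ℕ} (h : a + 2 ≤ b ∨ b + 2 ≤ a) :
    rN n b * sN n a = sN n a * rN n b := by
  by_cases hb : b < n - 1
  · by_cases ha : a < n - 1
    · have hfar : Far (⟨a, ha⟩ : Fin (n - 1)) ⟨b, hb⟩ := by
        simp only [Far]; omega
      rw [rN_lt hb, sN_lt ha, ← map_mul, ← map_mul]
      exact (mk_sound (Rel.sr hfar)).symm
    · rw [sN_ge ha, one_mul, mul_one]
  · rw [rN_ge hb, one_mul, mul_one]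

/-- τ-ρ far commutation -/
lemma tN_rN_far {a b : ℕ} (h : a + 2 ≤ b ∨ b + 2 ≤ a) :
    rN n b * tN n a = tN n a * rN n b := by
  by_cases hb : b < n - 1
  · by_cases ha : a < n - 1
    · have hfar : Far (⟨a, ha⟩ : Fin (n - 1)) ⟨b, hb⟩ := by
        simp only [Far]; omega
      rw [rN_lt hb, tN_lt ha, ← map_mul, ← map_mul]
      exact (mk_sound (Rel.tr hfar)).symm
    · rw [tN_ge ha, one_mul, mul_one]
  · rw [rN_ge hb, one_mul, mul_one]

lemma sN_sbN (t : ℕ) : sN n t * sbN n t = 1 := by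
  by_cases h : t < n - 1
  · rw [sN_lt h, sbN_lt h, ← map_mul]
    exact (mk_sound (Rel.ssb ⟨t, h⟩)).trans (map_one _)
  · rw [sN_ge h, sbN_ge h, one_mul]

lemma sbN_sN (t : ℕ) : sbN n t * sN n t = 1 := by
  by_cases h : t < n - 1
  · rw [sN_lt h, sbN_lt h, ← map_mul]
    exact (mk_sound (Rel.sbs ⟨t, h⟩)).trans (map_one _)
  · rw [sN_ge h, sbN_ge h, one_mul]

/-- σ̄-ρ far commutation, derived -/
lemma sbN_rN_far {a b : ℕ} (h : a + 2 ≤ b ∨ b + 2 ≤ a) :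
    rN n b * sbN n a = sbN n a * rN n b := by
  calc rN n b * sbN n a = sbN n a * sN n a * rN n b * sbN n a := by
        rw [sbN_sN, one_mul]
    _ = sbN n a * (sN n a * rN n b) * sbN n a := by simp only [mul_assoc]
    _ = sbN n a * (rN n b * sN n a) * sbN n a := by rw [sN_rN_far h]
    _ = sbN n a * rN n b * (sN n a * sbN n a) := by simp only [mul_assoc]
    _ = sbN n a * rN n b := by rw [sN_sbN, mul_one]

/-- the mixed relation ρ_a σ_{a+1} ρ_a = ρ_{a+1} σ_a ρ_{a+1} , ℕ-indexed -/
lemma sN_rsr {a : ℕ} (h : a + 2 ≤ n - 1) :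
    rN n a * sN n (a + 1) * rN n a = rN n (a + 1) * sN n a * rN n (a + 1) := by
  have ha : a < n - 1 := by omega
  have ha1 : a + 1 < n - 1 := by omega
  rw [rN_lt ha, rN_lt ha1, sN_lt ha, sN_lt ha1, ← map_mul, ← map_mul, ← map_mul, ← map_mul]
  exact mk_sound (Rel.rsr (by simp))

lemma tN_rsr {a : ℕ} (h : a + 2 ≤ n - 1) :
    rN n a * tN n (a + 1) * rN n a = rN n (a + 1) * tN n a * rN n (a + 1) := by
  have ha : a < n - 1 := by omega
  have ha1 : a + 1 < n - 1 := by omega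
  rw [rN_lt ha, rN_lt ha1, tN_lt ha, tN_lt ha1, ← map_mul, ← map_mul, ← map_mul, ← map_mul]
  exact mk_sound (Rel.rtr (by simp))

lemma sbN_rsr {a : ℕ} (h : a + 2 ≤ n - 1) :
    rN n a * sbN n (a + 1) * rN n a = rN n (a + 1) * sbN n a * rN n (a + 1) := by
  refine eq_of_mul_eq_one (y := rN n a * sN n (a + 1) * rN n a) ?_ ?_
  · calc rN n a * sbN n (a + 1) * rN n a * (rN n a * sN n (a + 1) * rN n a)
        = rN n a * sbN n (a + 1) * ((rN n a * rN n a) * sN n (a + 1)) * rN n a := by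
          simp only [mul_assoc]
      _ = rN n a * (sbN n (a + 1) * sN n (a + 1)) * rN n a := by
          rw [rN_inv, one_mul]; simp only [mul_assoc]
      _ = 1 := by rw [sbN_sN, mul_one, rN_inv]
  · rw [sN_rsr h]
    calc rN n (a + 1) * sN n a * rN n (a + 1) * (rN n (a + 1) * sbN n a * rN n (a + 1))
        = rN n (a + 1) * sN n a * ((rN n (a + 1) * rN n (a + 1)) * sbN n a) * rN n (a + 1) := by
          simp only [mul_assoc]
      _ = rN n (a + 1) * (sN n a * sbN n a) * rN n (a + 1) := by
          rw [rN_inv, one_mul]; simp only [mul_assoc]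
      _ = 1 := by rw [sN_sbN, mul_one, rN_inv]

end Relations

section PermSide

variable {n : ℕ}

lemma swpN_inv (t : ℕ) : swpN n t * swpN n t = 1 := by
  by_cases h : t < n - 1
  · rw [swpN_lt h, swp, Equiv.swap_mul_self]
  · rw [swpN_ge h, one_mul]

lemma swpN_self_inv (t : ℕ) : (swpN n t)⁻¹ = swpN n t := by
  by_cases h : t < n - 1
  · rw [swpN_lt h, swp, Equiv.swap_inv]
  · rw [swpN_ge h, inv_one]

lemma swap_comm_of_fixes {n : ℕ} (p : Equiv.Perm (Fin n)) {u v : Fin n}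
    (hu : p u = u) (hv : p v = v) : p * Equiv.swap u v = Equiv.swap u v * p := by
  rw [Equiv.mul_swap_eq_swap_mul, hu, hv]

lemma swpN_far {a b : ℕ} (h : a + 2 ≤ b) : swpN n a * swpN n b = swpN n b * swpN n a := by
  by_cases hb : b < n - 1
  · have ha : a < n - 1 := by omega
    rw [swpN_lt ha, swpN_lt hb]
    refine swap_comm_of_fixes _ ?_ ?_
    · refine Equiv.swap_apply_of_ne_of_ne ?_ ?_ <;>
        (refine Fin.ne_of_val_ne ?_; simp only [fa, fb, Fin.val_mk]; omega)
    · refine Equiv.swap_apply_of_ne_of_ne ?_ ?_ <;>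
        (refine Fin.ne_of_val_ne ?_; simp only [fa, fb, Fin.val_mk]; omega)
  · rw [swpN_ge hb, one_mul, mul_one]

lemma swpN_braid {a : ℕ} (h : a + 2 ≤ n - 1) :
    swpN n a * swpN n (a + 1) * swpN n a = swpN n (a + 1) * swpN n a * swpN n (a + 1) := by
  have ha : a < n - 1 := by omega
  have ha1 : a + 1 < n - 1 := by omega
  have ha2 : a + 2 < n := by omega
  rw [swpN_lt ha, swpN_lt ha1]
  have e1 : swp (⟨a, ha⟩ : Fin (n-1)) * swp ⟨a+1, ha1⟩ * (swp ⟨a, ha⟩)⁻¹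
      = Equiv.swap (swp ⟨a, ha⟩ (fa ⟨a+1, ha1⟩)) (swp ⟨a, ha⟩ (fb ⟨a+1, ha1⟩)) := by
    rw [Equiv.swap_apply_apply]; rfl
  have e2 : swp (⟨a+1, ha1⟩ : Fin (n-1)) * swp ⟨a, ha⟩ * (swp ⟨a+1, ha1⟩)⁻¹
      = Equiv.swap (swp ⟨a+1, ha1⟩ (fa ⟨a, ha⟩)) (swp ⟨a+1, ha1⟩ (fb ⟨a, ha⟩)) := by
    rw [Equiv.swap_apply_apply]; rfl
  have v1 : swp (⟨a, ha⟩ : Fin (n-1)) (fa ⟨a+1, ha1⟩) = fa ⟨a, ha⟩ := by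
    have : fa (⟨a+1, ha1⟩ : Fin (n-1)) = fb ⟨a, ha⟩ := rfl
    rw [this, swp, Equiv.swap_apply_right]
  have v2 : swp (⟨a, ha⟩ : Fin (n-1)) (fb ⟨a+1, ha1⟩) = fb ⟨a+1, ha1⟩ := by
    refine Equiv.swap_apply_of_ne_of_ne ?_ ?_ <;>
      (refine Fin.ne_of_val_ne ?_; simp only [fa, fb, Fin.val_mk]; omega)
  have w1 : swp (⟨a+1, ha1⟩ : Fin (n-1)) (fa ⟨a, ha⟩) = fa ⟨a, ha⟩ := by
    refine Equiv.swap_apply_of_ne_of_ne ?_ ?_ <;>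
      (refine Fin.ne_of_val_ne ?_; simp only [fa, fb, Fin.val_mk]; omega)
  have w2 : swp (⟨a+1, ha1⟩ : Fin (n-1)) (fb ⟨a, ha⟩) = fb ⟨a+1, ha1⟩ := by
    have : fb (⟨a, ha⟩ : Fin (n-1)) = fa ⟨a+1, ha1⟩ := rfl
    rw [this, swp, Equiv.swap_apply_left]
  have sinv : ∀ (i : Fin (n-1)), (swp i)⁻¹ = swp i := fun i => by
    rw [swp, Equiv.swap_inv]
  rw [sinv] at e1 e2
  rw [v1, v2] at e1
  rw [w1, w2] at e2
  rw [e1, e2]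

end PermSide

section ConjHelpers

variable {M : Type*} [Monoid M]

lemma conj_of_comm {x y : M} (hx : x * x = 1) (c : x * y = y * x) : x * y * x = y := by
  rw [c, mul_assoc, hx, mul_one]

lemma sandwich {x D m A : M} (cD : x * D = D * x) (cA : x * A = A * x) :
    x * (D * m * A) * x = D * (x * m * x) * A := by
  calc x * (D * m * A) * x = (x * D) * (m * (A * x)) := by simp only [mul_assoc]
    _ = (D * x) * (m * (x * A)) := by rw [cD, ← cA]
    _ = D * (x * m * x) * A := by simp only [mul_assoc]

lemma slide_sandwich {x y D m A : M} (hD : x * D = D * y) (hA : y * A = A * x)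
    (hm : y * m = m * y) (hx : x * x = 1) : x * (D * m * A) * x = D * m * A := by
  calc x * (D * m * A) * x = (x * D) * (m * (A * x)) := by simp only [mul_assoc]
    _ = (D * y) * (m * (A * x)) := by rw [hD]
    _ = D * ((y * m) * (A * x)) := by simp only [mul_assoc]
    _ = D * ((m * y) * (A * x)) := by rw [hm]
    _ = D * (m * ((y * A) * x)) := by simp only [mul_assoc]
    _ = D * (m * ((A * x) * x)) := by rw [hA]
    _ = D * (m * (A * (x * x))) := by simp only [mul_assoc]
    _ = D * m * A := by rw [hx, mul_one, mul_assoc]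

lemma conj_conj {x w : M} (hx : x * x = 1) : x * (x * w * x) * x = w := by
  calc x * (x * w * x) * x = (x * x) * w * (x * x) := by simp only [mul_assoc]
    _ = w := by rw [hx, one_mul, mul_one]

lemma absorb_left {x D : M} (hx : x * x = 1) : x * (x * D) = D := by
  rw [← mul_assoc, hx, one_mul]

end ConjHelpers

section WGen

variable {n : ℕ}

lemma comm_mul {M : Type*} [Monoid M] {x a b : M} (ha : x * a = a * x) (hb : x * b = b * x) :
    x * (a * b) = (a * b) * x := by
  rw [← mul_assoc, ha, mul_assoc, hb, ← mul_assoc]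

lemma rfar2 (x u : ℕ) (h : x + 2 ≤ u ∨ u + 2 ≤ x) : rN n x * rN n u = rN n u * rN n x := by
  rcases h with h | h
  · exact rN_far h
  · exact (rN_far h).symm

/-- the element `x_{k,l}`-shaped word for a general middle family `g` -/
def wGen (g : ℕ → STVB n) (k l : ℕ) : STVB n :=
  if k < l then dscP (rN n) (k+1) l * g k * ascP (rN n) (k+1) l
  else dscP (rN n) (l+1) k * (rN n l * g l * rN n l) * ascP (rN n) (l+1) k

/-- action of the transposition `(j, j+1)` on indices -/
def swpv (j t : ℕ) : ℕ := if t = j then j + 1 else if t = j + 1 then j else t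

section MidLemmas

variable (g : ℕ → STVB n)
  (hgrsr : ∀ a, a + 2 ≤ n - 1 → rN n a * g (a + 1) * rN n a = rN n (a + 1) * g a * rN n (a + 1))

include hgrsr

lemma midX {j : ℕ} (h : j + 2 ≤ n - 1) :
    rN n j * (rN n (j+1) * g (j+1) * rN n (j+1)) * rN n j
      = rN n (j+1) * (rN n j * g j * rN n j) * rN n (j+1) := by
  have ha : ∀ z : STVB n, rN n j * (rN n j * z) = z := fun z => absorb_left (rN_inv j)
  have hb : ∀ z : STVB n, rN n (j+1) * (rN n (j+1) * z) = z :=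
    fun z => absorb_left (rN_inv (j+1))
  have key : rN n j * (rN n (j+1) * g (j+1) * rN n (j+1)) * rN n j
      = (rN n j * rN n (j+1) * rN n j) * (rN n j * g (j+1) * rN n j)
        * (rN n j * rN n (j+1) * rN n j) := by
    simp only [mul_assoc, ha]
  rw [key, rN_braid h, hgrsr j h]
  simp only [mul_assoc, hb]

lemma midY {l : ℕ} (h : l + 2 ≤ n - 1) :
    rN n l * (rN n (l+1) * (rN n l * g l * rN n l) * rN n (l+1)) * rN n l
      = rN n (l+1) * g (l+1) * rN n (l+1) := by
  rw [← midX g hgrsr h, conj_conj (rN_inv l)]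

end MidLemmas

lemma conj_wGen (g : ℕ → STVB n)
    (hgfar : ∀ a b, a + 2 ≤ b ∨ b + 2 ≤ a → rN n b * g a = g a * rN n b)
    (hgrsr : ∀ a, a + 2 ≤ n - 1 → rN n a * g (a + 1) * rN n a = rN n (a + 1) * g a * rN n (a + 1))
    (j k l : ℕ) (hj : j < n - 1) (hk : k < n) (hl : l < n) (hkl : k ≠ l) :
    rN n j * wGen g k l * rN n j = wGen g (swpv j k) (swpv j l) := by
  have hfar : ∀ a b, a + 2 ≤ b → rN n a * rN n b = rN n b * rN n a := fun a b h => rN_far h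
  have hbraid : ∀ a, a + 2 ≤ n - 1 → rN n a * rN n (a+1) * rN n a
      = rN n (a+1) * rN n a * rN n (a+1) := fun a h => rN_braid h
  rcases Nat.lt_or_ge k l with hlt | hge
  · -- k < l
    have hln : l ≤ n - 1 := by omega
    by_cases c1 : j + 2 ≤ k
    · -- (a) far left
      have ek : swpv j k = k := by unfold swpv; split_ifs <;> omega
      have el : swpv j l = l := by unfold swpv; split_ifs <;> omega
      rw [ek, el]
      simp only [wGen, if_pos hlt]
      refine conj_of_comm (rN_inv j) ?_
      refine comm_mul (comm_mul ?_ ?_) ?_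
      · exact dscP_comm (rN n) (fun u h1 h2 => rfar2 j u (Or.inl (by omega)))
      · exact hgfar k j (Or.inr (by omega))
      · exact ascP_comm (rN n) (fun u h1 h2 => rfar2 j u (Or.inl (by omega)))
    · by_cases c2 : j + 1 = k
      · -- (b) j = k - 1
        obtain rfl : k = j + 1 := c2.symm
        have ek : swpv j (j+1) = j := by unfold swpv; split_ifs <;> omega
        have el : swpv j l = l := by unfold swpv; split_ifs <;> omega
        rw [ek, el]
        simp only [wGen, if_pos hlt, if_pos (show j < l by omega)]
        have cD : rN n j * dscP (rN n) (j+1+1) l = dscP (rN n) (j+1+1) l * rN n j :=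
          dscP_comm (rN n) (fun u h1 h2 => rfar2 j u (Or.inl (by omega)))
        have cA : rN n j * ascP (rN n) (j+1+1) l = ascP (rN n) (j+1+1) l * rN n j :=
          ascP_comm (rN n) (fun u h1 h2 => rfar2 j u (Or.inl (by omega)))
        rw [sandwich cD cA, hgrsr j (by omega),
          dscP_concat (rN n) (show j + 1 < l by omega), ascP_cons (rN n) (show j + 1 < l by omega)]
        simp only [mul_assoc]
      · by_cases c3 : j = k
        · -- (c)/(d) j = k
          obtain rfl : j = k := c3
          have ek : swpv j j = j + 1 := by unfold swpv; split_ifs <;> omega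
          rcases Nat.lt_or_ge (j+1) l with hd | hd
          · -- (d) l ≥ k + 2
            have el : swpv j l = l := by unfold swpv; split_ifs <;> omega
            rw [ek, el]
            simp only [wGen, if_pos hlt, if_pos (show j + 1 < l from hd)]
            have cD : rN n j * dscP (rN n) (j+1+1) l = dscP (rN n) (j+1+1) l * rN n j :=
              dscP_comm (rN n) (fun u h1 h2 => rfar2 j u (Or.inl (by omega)))
            have cA : rN n j * ascP (rN n) (j+1+1) l = ascP (rN n) (j+1+1) l * rN n j :=
              ascP_comm (rN n) (fun u h1 h2 => rfar2 j u (Or.inl (by omega)))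
            rw [dscP_concat (rN n) hd, ascP_cons (rN n) hd]
            have e5 : dscP (rN n) (j+1+1) l * rN n (j+1) * g j * (rN n (j+1) * ascP (rN n) (j+1+1) l)
                = dscP (rN n) (j+1+1) l * (rN n (j+1) * g j * rN n (j+1)) * ascP (rN n) (j+1+1) l := by
              simp only [mul_assoc]
            rw [e5, sandwich cD cA, ← hgrsr j (by omega), conj_conj (rN_inv j)]
          · -- (c) l = k + 1
            have hl1 : l = j + 1 := by omega
            subst hl1
            have el : swpv j (j+1) = j := by unfold swpv; split_ifs <;> omega
            rw [ek, el]
            simp only [wGen, if_pos hlt, if_neg (show ¬ j + 1 < j by omega)]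
            rw [dscP_nil (rN n) (le_refl (j+1)), ascP_nil (rN n) (le_refl (j+1)), one_mul, mul_one,
              one_mul, mul_one]
        · -- now j ≥ k + 1
          have hjk : k + 1 ≤ j := by omega
          by_cases c5 : j + 2 ≤ l
          · -- (e) interior slide
            have ek : swpv j k = k := by unfold swpv; split_ifs <;> omega
            have el : swpv j l = l := by unfold swpv; split_ifs <;> omega
            rw [ek, el]
            simp only [wGen, if_pos hlt]
            refine slide_sandwich (y := rN n (j+1)) ?_ ?_ ?_ (rN_inv j)
            · exact (dscP_slide (rN n) (n-1) hfar hbraid (a := k+1) (b := l) (s := j)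
                (by omega) (by omega) (by omega)).symm
            · exact ascP_slide (rN n) (n-1) hfar hbraid (a := k+1) (b := l) (s := j)
                (by omega) (by omega) (by omega)
            · exact hgfar k (j+1) (Or.inl (by omega))
          · by_cases c6 : j + 1 = l
            · -- (f) j = l - 1
              obtain rfl : l = j + 1 := c6.symm
              have ek : swpv j k = k := by unfold swpv; split_ifs <;> omega
              have el : swpv j (j+1) = j := by unfold swpv; split_ifs <;> omega
              rw [ek, el]
              simp only [wGen, if_pos hlt, if_pos (show k < j by omega)]
              rw [dscP_cons (rN n) (show k + 1 ≤ j from hjk),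
                ascP_concat (rN n) (show k + 1 ≤ j from hjk)]
              have e5 : rN n j * dscP (rN n) (k+1) j * g k * (ascP (rN n) (k+1) j * rN n j)
                  = rN n j * (dscP (rN n) (k+1) j * g k * ascP (rN n) (k+1) j) * rN n j := by
                simp only [mul_assoc]
              rw [e5, conj_conj (rN_inv j)]
            · by_cases c7 : j = l
              · -- (g) j = l
                obtain rfl : j = l := c7
                have ek : swpv j k = k := by unfold swpv; split_ifs <;> omega
                have el : swpv j j = j + 1 := by unfold swpv; split_ifs <;> omega
                rw [ek, el]
                simp only [wGen, if_pos hlt, if_pos (show k < j + 1 by omega)]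
                rw [dscP_cons (rN n) (show k + 1 ≤ j by omega),
                  ascP_concat (rN n) (show k + 1 ≤ j by omega)]
                simp only [mul_assoc]
              · -- (h) j ≥ l + 1
                have hjl : l + 1 ≤ j := by omega
                have ek : swpv j k = k := by unfold swpv; split_ifs <;> omega
                have el : swpv j l = l := by unfold swpv; split_ifs <;> omega
                rw [ek, el]
                simp only [wGen, if_pos hlt]
                refine conj_of_comm (rN_inv j) ?_
                refine comm_mul (comm_mul ?_ ?_) ?_
                · exact dscP_comm (rN n) (fun u h1 h2 => rfar2 j u (Or.inr (by omega)))
                · exact hgfar k j (Or.inl (by omega))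
                · exact ascP_comm (rN n) (fun u h1 h2 => rfar2 j u (Or.inr (by omega)))
  · -- k > l
    have hkl' : l < k := by omega
    have hkn : k ≤ n - 1 := by omega
    by_cases d1 : j + 2 ≤ l
    · -- (a') far left
      have ek : swpv j k = k := by unfold swpv; split_ifs <;> omega
      have el : swpv j l = l := by unfold swpv; split_ifs <;> omega
      rw [ek, el]
      simp only [wGen, if_neg (show ¬ k < l by omega)]
      refine conj_of_comm (rN_inv j) ?_
      refine comm_mul (comm_mul ?_ ?_) ?_
      · exact dscP_comm (rN n) (fun u h1 h2 => rfar2 j u (Or.inl (by omega)))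
      · refine comm_mul (comm_mul ?_ ?_) ?_
        · exact rfar2 j l (Or.inl (by omega))
        · exact hgfar l j (Or.inr (by omega))
        · exact rfar2 j l (Or.inl (by omega))
      · exact ascP_comm (rN n) (fun u h1 h2 => rfar2 j u (Or.inl (by omega)))
    · by_cases d2 : j + 1 = l
      · -- (b') j = l - 1
        obtain rfl : l = j + 1 := d2.symm
        have ek : swpv j k = k := by unfold swpv; split_ifs <;> omega
        have el : swpv j (j+1) = j := by unfold swpv; split_ifs <;> omega
        rw [ek, el]
        simp only [wGen, if_neg (show ¬ k < j + 1 by omega), if_neg (show ¬ k < j by omega)]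
        have cD : rN n j * dscP (rN n) (j+1+1) k = dscP (rN n) (j+1+1) k * rN n j :=
          dscP_comm (rN n) (fun u h1 h2 => rfar2 j u (Or.inl (by omega)))
        have cA : rN n j * ascP (rN n) (j+1+1) k = ascP (rN n) (j+1+1) k * rN n j :=
          ascP_comm (rN n) (fun u h1 h2 => rfar2 j u (Or.inl (by omega)))
        rw [sandwich cD cA, midX g hgrsr (by omega),
          dscP_concat (rN n) (show j + 1 < k by omega), ascP_cons (rN n) (show j + 1 < k by omega)]
        simp only [mul_assoc]
      · by_cases d3 : j = l
        · obtain rfl : j = l := d3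
          have ek' : swpv j j = j + 1 := by unfold swpv; split_ifs <;> omega
          rcases Nat.lt_or_ge (j+1) k with hd | hd
          · -- (d') k ≥ l + 2
            have ek : swpv j k = k := by unfold swpv; split_ifs <;> omega
            rw [ek, ek']
            simp only [wGen, if_neg (show ¬ k < j by omega), if_neg (show ¬ k < j + 1 by omega)]
            have cD : rN n j * dscP (rN n) (j+1+1) k = dscP (rN n) (j+1+1) k * rN n j :=
              dscP_comm (rN n) (fun u h1 h2 => rfar2 j u (Or.inl (by omega)))
            have cA : rN n j * ascP (rN n) (j+1+1) k = ascP (rN n) (j+1+1) k * rN n j :=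
              ascP_comm (rN n) (fun u h1 h2 => rfar2 j u (Or.inl (by omega)))
            rw [dscP_concat (rN n) hd, ascP_cons (rN n) hd]
            have e5 : dscP (rN n) (j+1+1) k * rN n (j+1) * (rN n j * g j * rN n j)
                  * (rN n (j+1) * ascP (rN n) (j+1+1) k)
                = dscP (rN n) (j+1+1) k * (rN n (j+1) * (rN n j * g j * rN n j) * rN n (j+1))
                  * ascP (rN n) (j+1+1) k := by
              simp only [mul_assoc]
            rw [e5, sandwich cD cA, midY g hgrsr (by omega)]
          · -- (c') k = l + 1
            have hk1 : k = j + 1 := by omega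
            subst hk1
            have ek : swpv j (j+1) = j := by unfold swpv; split_ifs <;> omega
            rw [ek, ek']
            simp only [wGen, if_neg (show ¬ j + 1 < j by omega), if_pos (show j < j + 1 by omega)]
            rw [dscP_nil (rN n) (le_refl (j+1)), ascP_nil (rN n) (le_refl (j+1)), one_mul, mul_one,
              one_mul, mul_one, conj_conj (rN_inv j)]
        · -- j ≥ l + 1
          have hjl : l + 1 ≤ j := by omega
          by_cases d5 : j + 2 ≤ k
          · -- (e') interior slide
            have ek : swpv j k = k := by unfold swpv; split_ifs <;> omega
            have el : swpv j l = l := by unfold swpv; split_ifs <;> omega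
            rw [ek, el]
            simp only [wGen, if_neg (show ¬ k < l by omega)]
            refine slide_sandwich (y := rN n (j+1)) ?_ ?_ ?_ (rN_inv j)
            · exact (dscP_slide (rN n) (n-1) hfar hbraid (a := l+1) (b := k) (s := j)
                (by omega) (by omega) (by omega)).symm
            · exact ascP_slide (rN n) (n-1) hfar hbraid (a := l+1) (b := k) (s := j)
                (by omega) (by omega) (by omega)
            · refine comm_mul (comm_mul ?_ ?_) ?_
              · exact rfar2 (j+1) l (Or.inr (by omega))
              · exact hgfar l (j+1) (Or.inl (by omega))
              · exact rfar2 (j+1) l (Or.inr (by omega))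
          · by_cases d6 : j + 1 = k
            · -- (f') j = k - 1
              obtain rfl : k = j + 1 := d6.symm
              have ek : swpv j (j+1) = j := by unfold swpv; split_ifs <;> omega
              have el : swpv j l = l := by unfold swpv; split_ifs <;> omega
              rw [ek, el]
              simp only [wGen, if_neg (show ¬ j + 1 < l by omega),
                if_neg (show ¬ j < l by omega)]
              rw [dscP_cons (rN n) (show l + 1 ≤ j from hjl),
                ascP_concat (rN n) (show l + 1 ≤ j from hjl)]
              have e5 : rN n j * dscP (rN n) (l+1) j * (rN n l * g l * rN n l)
                    * (ascP (rN n) (l+1) j * rN n j)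
                  = rN n j * (dscP (rN n) (l+1) j * (rN n l * g l * rN n l)
                    * ascP (rN n) (l+1) j) * rN n j := by
                simp only [mul_assoc]
              rw [e5, conj_conj (rN_inv j)]
            · by_cases d7 : j = k
              · -- (g') j = k
                obtain rfl : j = k := d7
                have ek : swpv j j = j + 1 := by unfold swpv; split_ifs <;> omega
                have el : swpv j l = l := by unfold swpv; split_ifs <;> omega
                rw [ek, el]
                simp only [wGen, if_neg (show ¬ j < l by omega),
                  if_neg (show ¬ j + 1 < l by omega)]
                rw [dscP_cons (rN n) (show l + 1 ≤ j by omega),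
                  ascP_concat (rN n) (show l + 1 ≤ j by omega)]
                simp only [mul_assoc]
              · -- (h') j ≥ k + 1
                have ek : swpv j k = k := by unfold swpv; split_ifs <;> omega
                have el : swpv j l = l := by unfold swpv; split_ifs <;> omega
                rw [ek, el]
                simp only [wGen, if_neg (show ¬ k < l by omega)]
                refine conj_of_comm (rN_inv j) ?_
                refine comm_mul (comm_mul ?_ ?_) ?_
                · exact dscP_comm (rN n) (fun u h1 h2 => rfar2 j u (Or.inr (by omega)))
                · refine comm_mul (comm_mul ?_ ?_) ?_
                  · exact rfar2 j l (Or.inr (by omega))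
                  · exact hgfar l j (Or.inl (by omega))
                  · exact rfar2 j l (Or.inr (by omega))
                · exact ascP_comm (rN n) (fun u h1 h2 => rfar2 j u (Or.inr (by omega)))

end WGen

section GammaConj

variable {n : ℕ}

lemma rhoE_inv (i : Fin (n - 1)) : rhoE n i * rhoE n i = 1 := by
  rw [rhoE, ← map_mul]
  exact (mk_sound (Rel.rho2 i)).trans (map_one _)

lemma rho_gam_conj (i : Fin (n - 1)) (j : Fin n) :
    rhoE n i * gamE n j * rhoE n i = gamE n (swp i j) := by
  have E : gamE n (fb i) * rhoE n i = rhoE n i * gamE n (fa i) := by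
    simp only [gamE, rhoE, ← map_mul]
    exact mk_sound (Rel.grel i)
  by_cases h1 : j = fa i
  · subst h1
    have : swp i (fa i) = fb i := Equiv.swap_apply_left _ _
    rw [this, ← E, mul_assoc, rhoE_inv, mul_one]
  · by_cases h2 : j = fb i
    · subst h2
      have : swp i (fb i) = fa i := Equiv.swap_apply_right _ _
      rw [this, mul_assoc, E, ← mul_assoc, rhoE_inv, one_mul]
    · have : swp i j = j := Equiv.swap_apply_of_ne_of_ne h1 h2
      rw [this]
      refine conj_of_comm (rhoE_inv i) ?_
      have C : gamE n j * rhoE n i = rhoE n i * gamE n j := by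
        simp only [gamE, rhoE, ← map_mul]
        exact mk_sound (Rel.grc h1 h2)
      exact C.symm

end GammaConj

section SwpApply

variable {n : ℕ}

lemma swpN_apply_of_ne {t : ℕ} (x : Fin n) (h1 : x.val ≠ t) (h2 : x.val ≠ t + 1) :
    swpN n t x = x := by
  by_cases ht : t < n - 1
  · rw [swpN_lt ht, swp]
    refine Equiv.swap_apply_of_ne_of_ne (fun hx => h1 ?_) (fun hx => h2 ?_)
    · exact congrArg Fin.val hx
    · exact congrArg Fin.val hx
  · rw [swpN_ge ht]; rfl

lemma swpN_apply_bot {t : ℕ} (ht : t < n - 1) (hf : t < n) :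
    swpN n t ⟨t, hf⟩ = ⟨t + 1, by omega⟩ := by
  rw [swpN_lt ht, swp]
  have e : (⟨t, hf⟩ : Fin n) = fa ⟨t, ht⟩ := rfl
  rw [e, Equiv.swap_apply_left]; rfl

lemma swpN_apply_top {t : ℕ} (ht : t < n - 1) (hf : t + 1 < n) :
    swpN n t ⟨t + 1, hf⟩ = ⟨t, by omega⟩ := by
  rw [swpN_lt ht, swp]
  have e : (⟨t + 1, hf⟩ : Fin n) = fb ⟨t, ht⟩ := rfl
  rw [e, Equiv.swap_apply_right]; rfl

lemma runP_out {k m : ℕ} : ∀ (x : Fin n), (x.val < k ∨ m < x.val) →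
    dscP (swpN n) k m x = x := by
  induction m with
  | zero =>
      intro x _
      rw [dscP_nil _ (Nat.zero_le k)]; rfl
  | succ m ih =>
      intro x hx
      by_cases hkm : k ≤ m
      · rw [dscP_cons _ hkm, Equiv.Perm.mul_apply, ih x (by omega)]
        exact swpN_apply_of_ne x (by omega) (by omega)
      · rw [dscP_nil _ (by omega)]; rfl

lemma runP_bot {k m : ℕ} (hkm : k ≤ m) (hm : m < n) :
    dscP (swpN n) k m ⟨k, by omega⟩ = ⟨m, hm⟩ := by
  induction m with
  | zero =>
      have hk0 : k = 0 := by omega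
      subst hk0
      rw [dscP_nil _ (le_refl 0)]; rfl
  | succ m ih =>
      rcases Nat.lt_or_ge m k with h | h
      · -- k = m + 1
        have : k = m + 1 := by omega
        subst this
        rw [dscP_nil _ (le_refl (m+1))]; rfl
      · rw [dscP_cons _ h, Equiv.Perm.mul_apply, ih h (by omega)]
        exact swpN_apply_bot (by omega) (by omega)

end SwpApply

section CanW

/-- canonical ρ-word for a permutation (bubble-sort normal form), by stages -/
def canW (n : ℕ) : ℕ → Equiv.Perm (Fin n) → List ℕ
  | 0, _ => []
  | m + 1, p =>
      if hm : m < n then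
        canW n m (p * (dscP (swpN n) ((p⁻¹ ⟨m, hm⟩).val) m)⁻¹)
          ++ (List.range' ((p⁻¹ ⟨m, hm⟩).val) (m - (p⁻¹ ⟨m, hm⟩).val)).reverse
      else canW n m p

/-- the product in `STVB n` of a list of ρ indices -/
def PlR (n : ℕ) (L : List ℕ) : STVB n := (L.map (rN n)).prod

variable {n : ℕ}

lemma PlR_append (L1 L2 : List ℕ) : PlR n (L1 ++ L2) = PlR n L1 * PlR n L2 := by
  rw [PlR, List.map_append, List.prod_append]; rfl

lemma PlR_runL (k m : ℕ) : PlR n ((List.range' k (m - k)).reverse) = dscP (rN n) k m := rfl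

lemma canW_one : ∀ m, canW n m 1 = [] := by
  intro m
  induction m with
  | zero => rfl
  | succ m ih =>
      rw [canW]
      by_cases hm : m < n
      · rw [dif_pos hm]
        have e1 : ((1 : Equiv.Perm (Fin n))⁻¹ ⟨m, hm⟩).val = m := rfl
        rw [e1, Nat.sub_self, dscP_nil _ (le_refl m)]
        simp only [inv_one, mul_one, ih, List.range'_zero, List.reverse_nil, List.append_nil]
      · rw [dif_neg hm, ih]

set_option maxHeartbeats 1000000 in
/-- The key exchange lemma: multiplying the canonical word by `ρ_i` on the right gives the
canonical word of `p * swpN i`. -/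
lemma exch : ∀ m, m ≤ n → ∀ p : Equiv.Perm (Fin n), (∀ x : Fin n, m ≤ x.val → p x = x) →
    ∀ i : ℕ, i + 2 ≤ m →
    PlR n (canW n m p) * rN n i = PlR n (canW n m (p * swpN n i)) := by
  intro m
  induction m with
  | zero => intro _ _ _ i hi; omega
  | succ m ih =>
      intro hmn p hp i hi
      have hm : m < n := by omega
      obtain ⟨k, hkeq⟩ : ∃ k, (p⁻¹ ⟨m, hm⟩).val = k := ⟨_, rfl⟩
      have hpK : p (p⁻¹ ⟨m, hm⟩) = ⟨m, hm⟩ := Equiv.apply_symm_apply p _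
      have hkm : k ≤ m := by
        by_contra hc
        push_neg at hc
        have h1 : p (p⁻¹ ⟨m, hm⟩) = p⁻¹ ⟨m, hm⟩ := hp _ (by omega)
        have h2 := congrArg Fin.val (h1.symm.trans hpK)
        simp only [Fin.val_mk] at h2
        omega
      have hkn : k < n := by omega
      have hKv : p⁻¹ ⟨m, hm⟩ = ⟨k, hkn⟩ := Fin.ext hkeq
      have hrm : dscP (swpN n) k m ⟨k, hkn⟩ = ⟨m, hm⟩ := runP_bot hkm hm
      have hqfix : ∀ x : Fin n, m ≤ x.val → (p * (dscP (swpN n) k m)⁻¹) x = x := by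
        intro x hx
        rcases Nat.eq_or_lt_of_le hx with hx1 | hx1
        · have hxm : x = ⟨m, hm⟩ := Fin.ext hx1.symm
          subst hxm
          have hinvm : (dscP (swpN n) k m)⁻¹ ⟨m, hm⟩ = ⟨k, hkn⟩ := by
            rw [Equiv.Perm.inv_eq_iff_eq]; exact hrm.symm
          rw [Equiv.Perm.mul_apply, hinvm, ← hKv, hpK]
        · have hout : dscP (swpN n) k m x = x := runP_out x (by omega)
          have hinvx : (dscP (swpN n) k m)⁻¹ x = x := by
            rw [Equiv.Perm.inv_eq_iff_eq]; exact hout.symm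
          rw [Equiv.Perm.mul_apply, hinvx]
          exact hp x (by omega)
      have hcan : canW n (m+1) p = canW n m (p * (dscP (swpN n) k m)⁻¹)
          ++ (List.range' k (m - k)).reverse := by
        rw [canW, dif_pos hm, hkeq]
      have hpsi : (p * swpN n i)⁻¹ ⟨m, hm⟩ = swpN n i ⟨k, hkn⟩ := by
        rw [mul_inv_rev, Equiv.Perm.mul_apply, swpN_self_inv, hKv]
      rcases Nat.lt_or_ge (i + 1) k with cA | cge
      · -- Case A : i + 2 ≤ k
        have hiK : swpN n i ⟨k, hkn⟩ = ⟨k, hkn⟩ := by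
          refine swpN_apply_of_ne _ ?_ ?_ <;> (simp only [Fin.val_mk]; omega)
        have hk' : ((p * swpN n i)⁻¹ ⟨m, hm⟩).val = k := by rw [hpsi, hiK]
        have hcomm : swpN n i * dscP (swpN n) k m = dscP (swpN n) k m * swpN n i :=
          dscP_comm (swpN n) (fun u h1 h2 => swpN_far (by omega))
        have hDinv : swpN n i * (dscP (swpN n) k m)⁻¹
            = (dscP (swpN n) k m)⁻¹ * swpN n i := by
          have h3 := congrArg Inv.inv hcomm
          simp only [mul_inv_rev, swpN_self_inv] at h3
          exact h3.symm
        have hq' : (p * swpN n i) * (dscP (swpN n) k m)⁻¹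
            = (p * (dscP (swpN n) k m)⁻¹) * swpN n i := by
          rw [mul_assoc, mul_assoc, hDinv]
        have hcan' : canW n (m+1) (p * swpN n i)
            = canW n m ((p * (dscP (swpN n) k m)⁻¹) * swpN n i)
              ++ (List.range' k (m - k)).reverse := by
          rw [canW, dif_pos hm, hk', hq']
        rw [hcan, hcan', PlR_append, PlR_append, PlR_runL]
        have hfarD : rN n i * dscP (rN n) k m = dscP (rN n) k m * rN n i :=
          dscP_comm (rN n) (fun u h1 h2 => rfar2 i u (Or.inl (by omega)))
        calc PlR n (canW n m (p * (dscP (swpN n) k m)⁻¹)) * dscP (rN n) k m * rN n i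
            = PlR n (canW n m (p * (dscP (swpN n) k m)⁻¹)) * (dscP (rN n) k m * rN n i) := by
              rw [mul_assoc]
          _ = PlR n (canW n m (p * (dscP (swpN n) k m)⁻¹)) * (rN n i * dscP (rN n) k m) := by
              rw [hfarD]
          _ = (PlR n (canW n m (p * (dscP (swpN n) k m)⁻¹)) * rN n i) * dscP (rN n) k m := by
              rw [mul_assoc]
          _ = PlR n (canW n m ((p * (dscP (swpN n) k m)⁻¹) * swpN n i)) * dscP (rN n) k m := by
              rw [ih (by omega) _ hqfix i (by omega)]
      · rcases Nat.lt_or_ge i k with cB | cC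
        · -- Case B : i + 1 = k
          obtain rfl : k = i + 1 := by omega
          have hiK : swpN n i ⟨i + 1, hkn⟩ = ⟨i, by omega⟩ :=
            swpN_apply_top (by omega) hkn
          have hk' : ((p * swpN n i)⁻¹ ⟨m, hm⟩).val = i := by rw [hpsi, hiK]
          have hsplit : dscP (swpN n) i m = dscP (swpN n) (i+1) m * swpN n i :=
            dscP_concat _ (by omega)
          have hq' : (p * swpN n i) * (dscP (swpN n) i m)⁻¹
              = p * (dscP (swpN n) (i+1) m)⁻¹ := by
            rw [hsplit, mul_inv_rev, swpN_self_inv, ← mul_assoc, mul_assoc p, swpN_inv, mul_one]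
          have hcan' : canW n (m+1) (p * swpN n i)
              = canW n m (p * (dscP (swpN n) (i+1) m)⁻¹)
                ++ (List.range' i (m - i)).reverse := by
            rw [canW, dif_pos hm, hk', hq']
          rw [hcan, hcan', PlR_append, PlR_append, PlR_runL, PlR_runL, mul_assoc]
          congr 1
          rw [dscP_concat (rN n) (show i < m by omega)]
        · rcases Nat.eq_or_lt_of_le cC with cC' | cD
          · -- Case C : k = k
            obtain rfl : k = i := cC'
            have hiK : swpN n k ⟨k, hkn⟩ = ⟨k + 1, by omega⟩ :=
              swpN_apply_bot (by omega) hkn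
            have hk' : ((p * swpN n k)⁻¹ ⟨m, hm⟩).val = k + 1 := by rw [hpsi, hiK]
            have hsplit : dscP (swpN n) k m = dscP (swpN n) (k+1) m * swpN n k :=
              dscP_concat _ (by omega)
            have hq' : (p * swpN n k) * (dscP (swpN n) (k+1) m)⁻¹
                = p * (dscP (swpN n) k m)⁻¹ := by
              rw [hsplit, mul_inv_rev, swpN_self_inv]
              simp only [mul_assoc]
            have hcan' : canW n (m+1) (p * swpN n k)
                = canW n m (p * (dscP (swpN n) k m)⁻¹)
                  ++ (List.range' (k+1) (m - (k+1))).reverse := by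
              rw [canW, dif_pos hm, hk', hq']
            rw [hcan, hcan', PlR_append, PlR_append, PlR_runL, PlR_runL, mul_assoc]
            congr 1
            rw [dscP_concat (rN n) (show k < m by omega), mul_assoc, rN_inv, mul_one]
          · -- Case D : k + 1 ≤ i
            obtain ⟨s, rfl⟩ : ∃ s, i = s + 1 := ⟨i - 1, by omega⟩
            have hiK : swpN n (s+1) ⟨k, hkn⟩ = ⟨k, hkn⟩ := by
              refine swpN_apply_of_ne _ ?_ ?_ <;> (simp only [Fin.val_mk]; omega)
            have hk' : ((p * swpN n (s+1))⁻¹ ⟨m, hm⟩).val = k := by rw [hpsi, hiK]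
            have hslide : dscP (swpN n) k m * swpN n (s+1) = swpN n s * dscP (swpN n) k m :=
              dscP_slide (swpN n) (n-1) (fun a b h => swpN_far h) (fun a h => swpN_braid h)
                (by omega) (by omega) (by omega)
            have hDinv : swpN n (s+1) * (dscP (swpN n) k m)⁻¹
                = (dscP (swpN n) k m)⁻¹ * swpN n s := by
              have h3 := congrArg Inv.inv hslide
              simp only [mul_inv_rev, swpN_self_inv] at h3
              exact h3
            have hq' : (p * swpN n (s+1)) * (dscP (swpN n) k m)⁻¹
                = (p * (dscP (swpN n) k m)⁻¹) * swpN n s := by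
              rw [mul_assoc, hDinv, ← mul_assoc]
            have hcan' : canW n (m+1) (p * swpN n (s+1))
                = canW n m ((p * (dscP (swpN n) k m)⁻¹) * swpN n s)
                  ++ (List.range' k (m - k)).reverse := by
              rw [canW, dif_pos hm, hk', hq']
            rw [hcan, hcan', PlR_append, PlR_append, PlR_runL]
            have hslideR : dscP (rN n) k m * rN n (s+1) = rN n s * dscP (rN n) k m :=
              dscP_slide (rN n) (n-1) (fun a b h => rN_far h) (fun a h => rN_braid h)
                (by omega) (by omega) (by omega)
            calc PlR n (canW n m (p * (dscP (swpN n) k m)⁻¹)) * dscP (rN n) k m * rN n (s+1)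
                = PlR n (canW n m (p * (dscP (swpN n) k m)⁻¹))
                    * (dscP (rN n) k m * rN n (s+1)) := by rw [mul_assoc]
              _ = PlR n (canW n m (p * (dscP (swpN n) k m)⁻¹))
                    * (rN n s * dscP (rN n) k m) := by rw [hslideR]
              _ = (PlR n (canW n m (p * (dscP (swpN n) k m)⁻¹)) * rN n s)
                    * dscP (rN n) k m := by rw [mul_assoc]
              _ = PlR n (canW n m ((p * (dscP (swpN n) k m)⁻¹) * swpN n s))
                    * dscP (rN n) k m := by
                  rw [ih (by omega) _ hqfix s (by omega)]

end CanW

section Bridges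

variable {n : ℕ}

lemma mk_desc (a b : ℕ) : mkS n (desc n a b) = dscP (rN n) (a+1) b := by
  rw [desc, dscP, show b - 1 - a = b - (a+1) by omega, map_list_prod, List.map_map]
  rfl

lemma mk_asc (a b : ℕ) : mkS n (asc n a b) = ascP (rN n) (a+1) b := by
  rw [asc, ascP, show b - 1 - a = b - (a+1) by omega, map_list_prod, List.map_map]
  rfl

lemma xelW (k l : Fin n) : xel n k l = wGen (sN n) k.val l.val := by
  rw [xel, xW, wGen]
  by_cases h : (k : ℕ) < l
  · rw [if_pos h, if_pos h, map_mul, map_mul, mk_desc, mk_asc]; rfl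
  · rw [if_neg h, if_neg h, map_mul, map_mul, map_mul, map_mul, mk_desc, mk_asc]; rfl

lemma xBarW' (k l : Fin n) : xBar n k l = wGen (sbN n) k.val l.val := by
  rw [xBar, xBarW, wGen]
  by_cases h : (k : ℕ) < l
  · rw [if_pos h, if_pos h, map_mul, map_mul, mk_desc, mk_asc]; rfl
  · rw [if_neg h, if_neg h, map_mul, map_mul, map_mul, map_mul, mk_desc, mk_asc]; rfl

lemma zelW (k l : Fin n) : zel n k l = wGen (tN n) k.val l.val := by
  rw [zel, zW, wGen]
  by_cases h : (k : ℕ) < l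
  · rw [if_pos h, if_pos h, map_mul, map_mul, mk_desc, mk_asc]; rfl
  · rw [if_neg h, if_neg h, map_mul, map_mul, map_mul, map_mul, mk_desc, mk_asc]; rfl

lemma swp_val (j : Fin (n-1)) (t : Fin n) : (swp j t).val = swpv j.val t.val := by
  unfold swpv
  by_cases h1 : t.val = j.val
  · have ht : t = fa j := Fin.ext h1
    rw [ht, swp, Equiv.swap_apply_left]
    simp only [fa, fb, Fin.val_mk]
    split_ifs <;> omega
  · by_cases h2 : t.val = j.val + 1
    · have ht : t = fb j := Fin.ext h2
      rw [ht, swp, Equiv.swap_apply_right]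
      simp only [fa, fb, Fin.val_mk]
      split_ifs <;> omega
    · rw [swp, Equiv.swap_apply_of_ne_of_ne (fun hx => h1 (congrArg Fin.val hx))
        (fun hx => h2 (congrArg Fin.val hx)), if_neg h1, if_neg h2]

lemma sigE_xel (i : Fin (n-1)) : sigE n i = xel n (fa i) (fb i) := by
  rw [xelW (fa i) (fb i), wGen,
    if_pos (show ((fa i : Fin n) : ℕ) < ((fb i : Fin n) : ℕ) from Nat.lt_succ_self _),
    dscP_nil (rN n) (a := ((fa i : Fin n) : ℕ) + 1) (b := ((fb i : Fin n) : ℕ))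
      (Nat.le_of_eq rfl),
    ascP_nil (rN n) (a := ((fa i : Fin n) : ℕ) + 1) (b := ((fb i : Fin n) : ℕ))
      (Nat.le_of_eq rfl), one_mul, mul_one,
    sN_lt (show ((fa i : Fin n) : ℕ) < n - 1 from i.isLt)]
  rfl

lemma sigbE_xBar (i : Fin (n-1)) : sigbE n i = xBar n (fa i) (fb i) := by
  rw [xBarW' (fa i) (fb i), wGen,
    if_pos (show ((fa i : Fin n) : ℕ) < ((fb i : Fin n) : ℕ) from Nat.lt_succ_self _),
    dscP_nil (rN n) (a := ((fa i : Fin n) : ℕ) + 1) (b := ((fb i : Fin n) : ℕ))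
      (Nat.le_of_eq rfl),
    ascP_nil (rN n) (a := ((fa i : Fin n) : ℕ) + 1) (b := ((fb i : Fin n) : ℕ))
      (Nat.le_of_eq rfl), one_mul, mul_one,
    sbN_lt (show ((fa i : Fin n) : ℕ) < n - 1 from i.isLt)]
  rfl

lemma tauE_zel (i : Fin (n-1)) : tauE n i = zel n (fa i) (fb i) := by
  rw [zelW (fa i) (fb i), wGen,
    if_pos (show ((fa i : Fin n) : ℕ) < ((fb i : Fin n) : ℕ) from Nat.lt_succ_self _),
    dscP_nil (rN n) (a := ((fa i : Fin n) : ℕ) + 1) (b := ((fb i : Fin n) : ℕ))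
      (Nat.le_of_eq rfl),
    ascP_nil (rN n) (a := ((fa i : Fin n) : ℕ) + 1) (b := ((fb i : Fin n) : ℕ))
      (Nat.le_of_eq rfl), one_mul, mul_one,
    tN_lt (show ((fa i : Fin n) : ℕ) < n - 1 from i.isLt)]
  rfl

lemma rhoE_rN (i : Fin (n-1)) : rhoE n i = rN n i.val := by
  rw [rN_lt i.isLt]
  rfl

lemma swp_swpN (i : Fin (n-1)) : swp i = swpN n i.val := by
  rw [swpN_lt i.isLt]

lemma PlR_mul_rev (L : List ℕ) : PlR n L * PlR n L.reverse = 1 := by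
  induction L with
  | nil => rfl
  | cons a L ih =>
      have e1 : PlR n (a :: L) = rN n a * PlR n L := by
        rw [PlR, List.map_cons, List.prod_cons]; rfl
      have e2 : PlR n (L.reverse ++ [a]) = PlR n L.reverse * rN n a := by
        rw [PlR_append]
        congr 1
        rw [PlR, List.map_cons, List.map_nil, List.prod_cons, List.prod_nil, mul_one]
      rw [List.reverse_cons, e1, e2]
      calc rN n a * PlR n L * (PlR n L.reverse * rN n a)
          = rN n a * (PlR n L * PlR n L.reverse) * rN n a := by simp only [mul_assoc]
        _ = 1 := by rw [ih, mul_one, rN_inv]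

lemma PlR_rev_mul (L : List ℕ) : PlR n L.reverse * PlR n L = 1 := by
  have h := PlR_mul_rev (n := n) L.reverse
  rw [List.reverse_reverse] at h
  exact h

end Bridges

section Assembly

variable {n : ℕ}

/-- the generating set of the statement -/
def genSet (n : ℕ) : Set (STVB n) :=
  {x : STVB n | ∃ k l : Fin n, k ≠ l ∧ (x = xel n k l ∨ x = xBar n k l ∨ x = zel n k l)}
    ∪ Set.range (gamE n)

lemma fa_ne_fb (i : Fin (n-1)) : fa i ≠ fb i := by
  intro h
  have := congrArg Fin.val h
  simp only [fa, fb, Fin.val_mk] at this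
  omega

lemma conjR (t : ℕ) {x : STVB n} (hx : x ∈ Submonoid.closure (genSet n)) :
    rN n t * x * rN n t ∈ Submonoid.closure (genSet n) := by
  by_cases hht : t < n - 1
  case neg => rw [rN_ge hht, one_mul, mul_one]; exact hx
  refine Submonoid.closure_induction
    (motive := fun y _ => rN n t * y * rN n t ∈ Submonoid.closure (genSet n)) ?_ ?_ ?_ hx
  · intro y hy
    rcases hy with ⟨k, l, hkl, h3⟩ | ⟨j, rfl⟩
    · have hvne : k.val ≠ l.val := fun hv => hkl (Fin.ext hv)
      have hswpne : swp ⟨t, hht⟩ k ≠ swp ⟨t, hht⟩ l := fun h => hkl (Equiv.injective _ h)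
      have hval : ∀ u : Fin n, (swp ⟨t, hht⟩ u).val = swpv t u.val := by
        intro u
        rw [swp_val]
      rcases h3 with rfl | rfl | rfl
      · rw [xelW k l,
          conj_wGen (sN n) (fun a b h => sN_rN_far h) (fun a h => sN_rsr h) t k.val l.val hht
            k.isLt l.isLt hvne,
          show wGen (sN n) (swpv t k.val) (swpv t l.val)
              = xel n (swp ⟨t, hht⟩ k) (swp ⟨t, hht⟩ l) by
            rw [xelW, hval, hval]]
        exact Submonoid.subset_closure (Or.inl ⟨_, _, hswpne, Or.inl rfl⟩)
      · rw [xBarW' k l,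
          conj_wGen (sbN n) (fun a b h => sbN_rN_far h) (fun a h => sbN_rsr h) t k.val l.val hht
            k.isLt l.isLt hvne,
          show wGen (sbN n) (swpv t k.val) (swpv t l.val)
              = xBar n (swp ⟨t, hht⟩ k) (swp ⟨t, hht⟩ l) by
            rw [xBarW', hval, hval]]
        exact Submonoid.subset_closure (Or.inl ⟨_, _, hswpne, Or.inr (Or.inl rfl)⟩)
      · rw [zelW k l,
          conj_wGen (tN n) (fun a b h => tN_rN_far h) (fun a h => tN_rsr h) t k.val l.val hht
            k.isLt l.isLt hvne,
          show wGen (tN n) (swpv t k.val) (swpv t l.val)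
              = zel n (swp ⟨t, hht⟩ k) (swp ⟨t, hht⟩ l) by
            rw [zelW, hval, hval]]
        exact Submonoid.subset_closure (Or.inl ⟨_, _, hswpne, Or.inr (Or.inr rfl)⟩)
    · rw [← rhoE_rN ⟨t, hht⟩, rho_gam_conj]
      exact Submonoid.subset_closure (Or.inr ⟨_, rfl⟩)
  · show rN n t * 1 * rN n t ∈ Submonoid.closure (genSet n)
    rw [mul_one, rN_inv]
    exact one_mem _
  · intro x y _ _ hxc hyc
    have habs : ∀ z : STVB n, rN n t * (rN n t * z) = z := fun z => absorb_left (rN_inv t)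
    have key : rN n t * (x * y) * rN n t = (rN n t * x * rN n t) * (rN n t * y * rN n t) := by
      simp only [mul_assoc, habs]
    rw [key]
    exact mul_mem hxc hyc

lemma conjP (L : List ℕ) {x : STVB n} (hx : x ∈ Submonoid.closure (genSet n)) :
    PlR n L * x * PlR n L.reverse ∈ Submonoid.closure (genSet n) := by
  induction L with
  | nil =>
      rw [List.reverse_nil, show PlR n ([] : List ℕ) = 1 from rfl, one_mul, mul_one]
      exact hx
  | cons a L ih =>
      have e1 : PlR n (a :: L) = rN n a * PlR n L := by
        rw [PlR, List.map_cons, List.prod_cons]; rfl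
      have e2 : PlR n (L.reverse ++ [a]) = PlR n L.reverse * rN n a := by
        rw [PlR_append]
        congr 1
        rw [PlR, List.map_cons, List.map_nil, List.prod_cons, List.prod_nil, mul_one]
      rw [List.reverse_cons, e1, e2]
      have key : rN n a * PlR n L * x * (PlR n L.reverse * rN n a)
          = rN n a * (PlR n L * x * PlR n L.reverse) * rN n a := by
        simp only [mul_assoc]
      rw [key]
      exact conjR a ih

variable (φ : STVB n →* Equiv.Perm (Fin n))
  (hs : ∀ i : Fin (n - 1), φ (sigE n i) = 1)
  (hsb : ∀ i : Fin (n - 1), φ (sigbE n i) = 1)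
  (ht : ∀ i : Fin (n - 1), φ (tauE n i) = 1)
  (hr : ∀ i : Fin (n - 1), φ (rhoE n i) = swp i)
  (hg : ∀ j : Fin n, φ (gamE n j) = 1)

include hr in
lemma phi_rN : ∀ t, φ (rN n t) = swpN n t := by
  intro t
  by_cases h : t < n - 1
  · rw [rN_lt h, swpN_lt h]
    exact hr ⟨t, h⟩
  · rw [rN_ge h, swpN_ge h, map_one]

include hr in
lemma phi_PlR : ∀ L : List ℕ, φ (PlR n L) = (L.map (swpN n)).prod := by
  intro L
  induction L with
  | nil => exact map_one φ
  | cons a L ih =>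
      have e1 : PlR n (a :: L) = rN n a * PlR n L := by
        rw [PlR, List.map_cons, List.prod_cons]; rfl
      rw [e1, map_mul, phi_rN φ hr, ih, List.map_cons, List.prod_cons]

include hr in
lemma phi_dscP (a b : ℕ) : φ (dscP (rN n) a b) = dscP (swpN n) a b :=
  phi_PlR φ hr ((List.range' a (b - a)).reverse)

include hr in
lemma phi_ascP (a b : ℕ) : φ (ascP (rN n) a b) = ascP (swpN n) a b :=
  phi_PlR φ hr (List.range' a (b - a))

include hr in
lemma phi_wGen (g : ℕ → STVB n) (hg1 : ∀ t, φ (g t) = 1) (k l : ℕ) : φ (wGen g k l) = 1 := by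
  unfold wGen
  split_ifs with h
  · simp only [map_mul, hg1, mul_one, phi_dscP φ hr, phi_ascP φ hr]
    exact dscP_mul_ascP _ swpN_inv _ _
  · simp only [map_mul, hg1, mul_one, phi_rN φ hr, phi_dscP φ hr, phi_ascP φ hr]
    rw [swpN_inv, mul_one]
    exact dscP_mul_ascP _ swpN_inv _ _

include hs hsb ht hr hg in
lemma main_claim : ∀ l : List (Gen n), ∃ h ∈ Submonoid.closure (genSet n),
    mkS n (FreeMonoid.ofList l)
      = h * PlR n (canW n n (φ (mkS n (FreeMonoid.ofList l)))) := by
  intro l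
  induction l using List.reverseRecOn with
  | nil =>
      refine ⟨1, one_mem _, ?_⟩
      rw [show mkS n (FreeMonoid.ofList ([] : List (Gen n))) = 1 from map_one (mkS n), map_one,
        canW_one, show PlR n ([] : List ℕ) = 1 from rfl, one_mul]
  | append_singleton l a ih =>
      obtain ⟨h, hh, heq⟩ := ih
      have hsplit : mkS n (FreeMonoid.ofList (l ++ [a]))
          = mkS n (FreeMonoid.ofList l) * mkS n (FreeMonoid.of a) := by
        rw [FreeMonoid.ofList_append, map_mul, FreeMonoid.ofList_singleton]
      cases a with
      | rho i =>
          refine ⟨h, hh, ?_⟩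
          have hφa : φ (mkS n (FreeMonoid.of (Gen.rho i))) = swpN n i.val := by
            rw [show mkS n (FreeMonoid.of (Gen.rho i)) = rhoE n i from rfl, hr, swp_swpN]
          rw [hsplit, map_mul, hφa,
            show mkS n (FreeMonoid.of (Gen.rho i)) = rN n i.val from (rhoE_rN i)]
          conv_lhs => rw [heq]
          rw [mul_assoc,
            exch n (le_refl n) _ (fun x hx => absurd x.isLt (by omega)) i.val
              (by have := i.isLt; omega)]
      | sig i =>
          have hmem : sigE n i ∈ Submonoid.closure (genSet n) :=
            Submonoid.subset_closure (Or.inl ⟨fa i, fb i, fa_ne_fb i, Or.inl (sigE_xel i)⟩)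
          refine ⟨h * (PlR n (canW n n (φ (mkS n (FreeMonoid.ofList l)))) * sigE n i
            * PlR n (canW n n (φ (mkS n (FreeMonoid.ofList l)))).reverse),
            mul_mem hh (conjP _ hmem), ?_⟩
          have hφa : φ (mkS n (FreeMonoid.of (Gen.sig i))) = 1 := hs i
          rw [hsplit, map_mul, hφa, mul_one]
          conv_lhs => rw [heq]
          have hrm := PlR_rev_mul (n := n) (canW n n (φ (mkS n (FreeMonoid.ofList l))))
          calc h * PlR n (canW n n (φ (mkS n (FreeMonoid.ofList l))))
                * mkS n (FreeMonoid.of (Gen.sig i))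
              = h * (PlR n (canW n n (φ (mkS n (FreeMonoid.ofList l)))) * sigE n i
                  * (PlR n (canW n n (φ (mkS n (FreeMonoid.ofList l)))).reverse
                    * PlR n (canW n n (φ (mkS n (FreeMonoid.ofList l)))))) := by
                rw [hrm, mul_one]
                simp only [mul_assoc]
                rfl
            _ = h * (PlR n (canW n n (φ (mkS n (FreeMonoid.ofList l)))) * sigE n i
                  * PlR n (canW n n (φ (mkS n (FreeMonoid.ofList l)))).reverse)
                * PlR n (canW n n (φ (mkS n (FreeMonoid.ofList l)))) := by
                simp only [mul_assoc]
      | sigb i =>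
          have hmem : sigbE n i ∈ Submonoid.closure (genSet n) :=
            Submonoid.subset_closure
              (Or.inl ⟨fa i, fb i, fa_ne_fb i, Or.inr (Or.inl (sigbE_xBar i))⟩)
          refine ⟨h * (PlR n (canW n n (φ (mkS n (FreeMonoid.ofList l)))) * sigbE n i
            * PlR n (canW n n (φ (mkS n (FreeMonoid.ofList l)))).reverse),
            mul_mem hh (conjP _ hmem), ?_⟩
          have hφa : φ (mkS n (FreeMonoid.of (Gen.sigb i))) = 1 := hsb i
          rw [hsplit, map_mul, hφa, mul_one]
          conv_lhs => rw [heq]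
          have hrm := PlR_rev_mul (n := n) (canW n n (φ (mkS n (FreeMonoid.ofList l))))
          calc h * PlR n (canW n n (φ (mkS n (FreeMonoid.ofList l))))
                * mkS n (FreeMonoid.of (Gen.sigb i))
              = h * (PlR n (canW n n (φ (mkS n (FreeMonoid.ofList l)))) * sigbE n i
                  * (PlR n (canW n n (φ (mkS n (FreeMonoid.ofList l)))).reverse
                    * PlR n (canW n n (φ (mkS n (FreeMonoid.ofList l)))))) := by
                rw [hrm, mul_one]
                simp only [mul_assoc]
                rfl
            _ = h * (PlR n (canW n n (φ (mkS n (FreeMonoid.ofList l)))) * sigbE n i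
                  * PlR n (canW n n (φ (mkS n (FreeMonoid.ofList l)))).reverse)
                * PlR n (canW n n (φ (mkS n (FreeMonoid.ofList l)))) := by
                simp only [mul_assoc]
      | tau i =>
          have hmem : tauE n i ∈ Submonoid.closure (genSet n) :=
            Submonoid.subset_closure
              (Or.inl ⟨fa i, fb i, fa_ne_fb i, Or.inr (Or.inr (tauE_zel i))⟩)
          refine ⟨h * (PlR n (canW n n (φ (mkS n (FreeMonoid.ofList l)))) * tauE n i
            * PlR n (canW n n (φ (mkS n (FreeMonoid.ofList l)))).reverse),
            mul_mem hh (conjP _ hmem), ?_⟩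
          have hφa : φ (mkS n (FreeMonoid.of (Gen.tau i))) = 1 := ht i
          rw [hsplit, map_mul, hφa, mul_one]
          conv_lhs => rw [heq]
          have hrm := PlR_rev_mul (n := n) (canW n n (φ (mkS n (FreeMonoid.ofList l))))
          calc h * PlR n (canW n n (φ (mkS n (FreeMonoid.ofList l))))
                * mkS n (FreeMonoid.of (Gen.tau i))
              = h * (PlR n (canW n n (φ (mkS n (FreeMonoid.ofList l)))) * tauE n i
                  * (PlR n (canW n n (φ (mkS n (FreeMonoid.ofList l)))).reverse
                    * PlR n (canW n n (φ (mkS n (FreeMonoid.ofList l)))))) := by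
                rw [hrm, mul_one]
                simp only [mul_assoc]
                rfl
            _ = h * (PlR n (canW n n (φ (mkS n (FreeMonoid.ofList l)))) * tauE n i
                  * PlR n (canW n n (φ (mkS n (FreeMonoid.ofList l)))).reverse)
                * PlR n (canW n n (φ (mkS n (FreeMonoid.ofList l)))) := by
                simp only [mul_assoc]
      | gam j =>
          have hmem : gamE n j ∈ Submonoid.closure (genSet n) :=
            Submonoid.subset_closure (Or.inr ⟨j, rfl⟩)
          refine ⟨h * (PlR n (canW n n (φ (mkS n (FreeMonoid.ofList l)))) * gamE n j
            * PlR n (canW n n (φ (mkS n (FreeMonoid.ofList l)))).reverse),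
            mul_mem hh (conjP _ hmem), ?_⟩
          have hφa : φ (mkS n (FreeMonoid.of (Gen.gam j))) = 1 := hg j
          rw [hsplit, map_mul, hφa, mul_one]
          conv_lhs => rw [heq]
          have hrm := PlR_rev_mul (n := n) (canW n n (φ (mkS n (FreeMonoid.ofList l))))
          calc h * PlR n (canW n n (φ (mkS n (FreeMonoid.ofList l))))
                * mkS n (FreeMonoid.of (Gen.gam j))
              = h * (PlR n (canW n n (φ (mkS n (FreeMonoid.ofList l)))) * gamE n j
                  * (PlR n (canW n n (φ (mkS n (FreeMonoid.ofList l)))).reverse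
                    * PlR n (canW n n (φ (mkS n (FreeMonoid.ofList l)))))) := by
                rw [hrm, mul_one]
                simp only [mul_assoc]
                rfl
            _ = h * (PlR n (canW n n (φ (mkS n (FreeMonoid.ofList l)))) * gamE n j
                  * PlR n (canW n n (φ (mkS n (FreeMonoid.ofList l)))).reverse)
                * PlR n (canW n n (φ (mkS n (FreeMonoid.ofList l)))) := by
                simp only [mul_assoc]

end Assembly

end SingTVB

open SingTVB in
/-- the submonoid `STVH n = φ₂⁻¹(1)` of `STVB n` is generated, as a monoid, by
the elements `x_{k,l}`, `x̄_{k,l}`, `z_{k,l}` (`k ≠ l`) and the `γ_j`. -/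
theorem stvh_generators (n : ℕ) (hn : 2 ≤ n) (φ : STVB n →* Equiv.Perm (Fin n))
    (hs : ∀ i : Fin (n - 1), φ (sigE n i) = 1)
    (hsb : ∀ i : Fin (n - 1), φ (sigbE n i) = 1)
    (ht : ∀ i : Fin (n - 1), φ (tauE n i) = 1)
    (hr : ∀ i : Fin (n - 1), φ (rhoE n i) = swp i)
    (hg : ∀ j : Fin n, φ (gamE n j) = 1) :
    Submonoid.closure
      ({x : STVB n | ∃ k l : Fin n, k ≠ l ∧ (x = xel n k l ∨ x = xBar n k l ∨ x = zel n k l)}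
        ∪ Set.range (gamE n)) = MonoidHom.mker φ := by
  show Submonoid.closure (genSet n) = MonoidHom.mker φ
  have hsN : ∀ t : ℕ, φ (sN n t) = 1 := by
    intro t
    by_cases h : t < n - 1
    · rw [sN_lt h]; exact hs ⟨t, h⟩
    · rw [sN_ge h, map_one]
  have hsbN : ∀ t : ℕ, φ (sbN n t) = 1 := by
    intro t
    by_cases h : t < n - 1
    · rw [sbN_lt h]; exact hsb ⟨t, h⟩
    · rw [sbN_ge h, map_one]
  have htN : ∀ t : ℕ, φ (tN n t) = 1 := by
    intro t
    by_cases h : t < n - 1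
    · rw [tN_lt h]; exact ht ⟨t, h⟩
    · rw [tN_ge h, map_one]
  refine le_antisymm ?_ ?_
  · rw [Submonoid.closure_le]
    rintro x hx
    rw [SetLike.mem_coe, MonoidHom.mem_mker]
    rcases hx with ⟨k, l, hkl, h3⟩ | ⟨j, rfl⟩
    · rcases h3 with rfl | rfl | rfl
      · rw [xelW]
        exact phi_wGen φ hr (sN n) hsN k.val l.val
      · rw [xBarW']
        exact phi_wGen φ hr (sbN n) hsbN k.val l.val
      · rw [zelW]
        exact phi_wGen φ hr (tN n) htN k.val l.val
    · exact hg j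
  · intro x hx
    obtain ⟨w, rfl⟩ := PresentedMonoid.surjective_mk (rels := Rel n) x
    have hker : φ (mkS n w) = 1 := MonoidHom.mem_mker.mp hx
    obtain ⟨h, hh, heq⟩ := main_claim φ hs hsb ht hr hg w.toList
    rw [FreeMonoid.ofList_toList] at heq
    rw [hker, canW_one, show PlR n ([] : List ℕ) = 1 from rfl, mul_one] at heq
    show mkS n w ∈ Submonoid.closure (genSet n)
    rw [heq]
    exact hh
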